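/- Let B be a unital C*-algebra and let u, v ∈ B be commuting unitaries. Then the Loring element e(u,v) ∈ M₂(B) is a projection: e(u,v)* = e(u,v) and e(u,v)² = e(u,v). -/

import Mathlib

open Complex

lemma cfc_mem_elemental' {B : Type*} [CStarAlgebra B] (φ : ℂ → ℂ) (u : B) [hu : IsStarNormal u] :
    cfc φ u ∈ StarAlgebra.elemental ℂ u := by
  by_cases hφ : ContinuousOn φ (spectrum ℂ u)
  · rw [cfc_apply φ u hu hφ, cfcHom_eq_of_isStarNormal]
    exact Subtype.coe_prop _
  · rw [cfc_apply_of_not_continuousOn u hφ]; exact zero_mem _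

lemma commute_cfc_of_commute' {B : Type*} [CStarAlgebra B] {u v : B} (hv : v ∈ unitary B)
    [IsStarNormal u] (huv : u * v = v * u) (φ : ℂ → ℂ) :
    v * cfc φ u = cfc φ u * v ∧ star v * cfc φ u = cfc φ u * star v := by
  have hv1 : star v * v = 1 := hv.1
  have hv2 : v * star v = 1 := hv.2
  have h2 : star v * u = u * star v := by
    calc star v * u = star v * u * (v * star v) := by rw [hv2, mul_one]
    _ = star v * (u * v) * star v := by rw [mul_assoc, mul_assoc, mul_assoc]
    _ = star v * (v * u) * star v := by rw [huv]
    _ = (star v * v) * (u * star v) := by rw [mul_assoc, mul_assoc, mul_assoc]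
    _ = u * star v := by rw [hv1, one_mul]
  have hmem : u ∈ StarSubalgebra.centralizer ℂ ({v} : Set B) := by
    rw [StarSubalgebra.mem_centralizer_iff]
    intro g hg
    rw [Set.mem_singleton_iff] at hg
    subst hg
    exact ⟨huv.symm, h2⟩
  have hclosed : IsClosed ((StarSubalgebra.centralizer ℂ ({v} : Set B) : Set B)) := by
    rw [StarSubalgebra.coe_centralizer]
    have heq : ((({v} : Set B) ∪ star {v}).centralizer : Set B)
        = ⋂ g ∈ (({v} : Set B) ∪ star {v}), {x | g * x = x * g} := by
      ext x
      simp [Set.mem_centralizer_iff]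
    rw [heq]
    exact isClosed_biInter fun g _ =>
      isClosed_eq (continuous_const.mul continuous_id) (continuous_id.mul continuous_const)
  have hle := StarAlgebra.elemental.le_of_mem hclosed hmem (cfc_mem_elemental' φ u)
  rw [StarSubalgebra.mem_centralizer_iff] at hle
  exact hle v rfl

/-- If `u, v` are commuting unitaries in a unital C*-algebra `B`, then the Loring element
`e(u,v) ∈ M₂(B)` is a projection: `e(u,v)* = e(u,v)` and `e(u,v)² = e(u,v)`. -/
theorem loring_element_projection {B : Type*} [CStarAlgebra B]
    (f g h : ℂ → ℝ)
    (hf : ContinuousOn f (Metric.sphere (0 : ℂ) 1))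
    (hg : ContinuousOn g (Metric.sphere (0 : ℂ) 1))
    (hh : ContinuousOn h (Metric.sphere (0 : ℂ) 1))
    (hrange : ∀ z : ℂ, ‖z‖ = 1 →
      f z ∈ Set.Icc (0 : ℝ) 1 ∧ g z ∈ Set.Icc (0 : ℝ) 1 ∧ h z ∈ Set.Icc (0 : ℝ) 1)
    (hsum : ∀ z : ℂ, ‖z‖ = 1 → (f z) ^ 2 + (g z) ^ 2 + (h z) ^ 2 = f z)
    (hgh : ∀ z : ℂ, ‖z‖ = 1 → g z * h z = 0)
    (hf1 : f 1 = 1) (hg1 : g 1 = 0) (hh1 : h 1 = 0)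
    (u v : B) (hu : u ∈ unitary B) (hv : v ∈ unitary B)
    (huv : u * v = v * u)
    (fu gu hu' : B)
    (hfu : fu = cfc (fun z : ℂ => (f z : ℂ)) u)
    (hgu : gu = cfc (fun z : ℂ => (g z : ℂ)) u)
    (hhu : hu' = cfc (fun z : ℂ => (h z : ℂ)) u)
    (e : Matrix (Fin 2) (Fin 2) B)
    (he : e = !![fu, gu + hu' * v; star v * hu' + gu, 1 - fu]) :
    star e = e ∧ e * e = e := by
  haveI hnu : IsStarNormal u := isStarNormal_of_mem_unitary hu
  have hspec : spectrum ℂ u ⊆ Metric.sphere (0 : ℂ) 1 := spectrum.subset_circle_of_unitary hu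
  have hnorm : ∀ z ∈ spectrum ℂ u, ‖z‖ = 1 := fun z hz => by
    have := hspec hz
    rwa [mem_sphere_zero_iff_norm] at this
  have hfc : ContinuousOn (fun z : ℂ => (f z : ℂ)) (spectrum ℂ u) :=
    (Complex.continuous_ofReal.comp_continuousOn hf).mono hspec
  have hgc : ContinuousOn (fun z : ℂ => (g z : ℂ)) (spectrum ℂ u) :=
    (Complex.continuous_ofReal.comp_continuousOn hg).mono hspec
  have hhc : ContinuousOn (fun z : ℂ => (h z : ℂ)) (spectrum ℂ u) :=
    (Complex.continuous_ofReal.comp_continuousOn hh).mono hspec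
  -- self-adjointness
  have hsa : star fu = fu := by
    rw [hfu, ← cfc_star]
    exact cfc_congr fun z _ => by simp [Complex.conj_ofReal]
  have hsb : star gu = gu := by
    rw [hgu, ← cfc_star]
    exact cfc_congr fun z _ => by simp [Complex.conj_ofReal]
  have hsc : star hu' = hu' := by
    rw [hhu, ← cfc_star]
    exact cfc_congr fun z _ => by simp [Complex.conj_ofReal]
  -- commutation among cfc elements
  have hab : fu * gu = gu * fu := by
    rw [hfu, hgu]; exact (cfc_commute_cfc _ _ u).eq
  have hac : fu * hu' = hu' * fu := by
    rw [hfu, hhu]; exact (cfc_commute_cfc _ _ u).eq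
  have hbc : gu * hu' = 0 := by
    rw [hgu, hhu, ← cfc_mul _ _ u hgc hhc]
    have : cfc (fun z : ℂ => (g z : ℂ) * (h z : ℂ)) u = cfc (fun _ : ℂ => (0 : ℂ)) u := by
      refine cfc_congr fun z hz => ?_
      norm_cast
      exact hgh z (hnorm z hz)
    rw [this, cfc_const_zero]
  have hcb : hu' * gu = 0 := by
    rw [hgu, hhu] at hbc ⊢
    rw [← (cfc_commute_cfc _ _ u).eq]
    exact hbc
  -- sum identity
  have hsum2 : fu * fu + gu * gu + hu' * hu' = fu := by
    rw [hfu, hgu, hhu, ← cfc_mul _ _ u hfc hfc, ← cfc_mul _ _ u hgc hgc,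
      ← cfc_mul _ _ u hhc hhc,
      ← cfc_add u (fun x => (f x : ℂ) * (f x : ℂ)) (fun x => (g x : ℂ) * (g x : ℂ))
        (hfc.mul hfc) (hgc.mul hgc),
      ← cfc_add u (fun x => (f x : ℂ) * (f x : ℂ) + (g x : ℂ) * (g x : ℂ))
        (fun x => (h x : ℂ) * (h x : ℂ)) ((hfc.mul hfc).add (hgc.mul hgc)) (hhc.mul hhc)]
    refine cfc_congr fun z hz => ?_
    have := hsum z (hnorm z hz)
    norm_cast
    linear_combination this
  -- commutation with v and star v
  have hva : v * fu = fu * v ∧ star v * fu = fu * star v := by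
    rw [hfu]; exact commute_cfc_of_commute' hv huv _
  have hvb : v * gu = gu * v ∧ star v * gu = gu * star v := by
    rw [hgu]; exact commute_cfc_of_commute' hv huv _
  have hvc : v * hu' = hu' * v ∧ star v * hu' = hu' * star v := by
    rw [hhu]; exact commute_cfc_of_commute' hv huv _
  have hv1 : star v * v = 1 := hv.1
  have hv2 : v * star v = 1 := hv.2
  constructor
  · -- star e = e
    rw [he]
    ext i j
    fin_cases i <;> fin_cases j <;>
      simp [Matrix.star_apply, star_add, star_mul, star_sub, star_one, hsa, hsb, hsc, add_comm]
  · -- e * e = e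
    rw [he, Matrix.mul_fin_two]
    have h00 : fu * fu + (gu + hu' * v) * (star v * hu' + gu) = fu := by
      have l1 : gu * (star v * hu') = 0 := by
        rw [← mul_assoc, ← hvb.2, mul_assoc, hbc, mul_zero]
      have l2 : (hu' * v) * (star v * hu') = hu' * hu' := by
        rw [mul_assoc, ← mul_assoc v, hv2, one_mul]
      have l3 : (hu' * v) * gu = 0 := by
        rw [mul_assoc, hvb.1, ← mul_assoc, hcb, zero_mul]
      rw [add_mul, mul_add, mul_add, l1, l2, l3, zero_add, add_zero, ← add_assoc]
      exact hsum2
    have h01 : fu * (gu + hu' * v) + (gu + hu' * v) * (1 - fu) = gu + hu' * v := by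
      have l1 : fu * (hu' * v) = (hu' * v) * fu := by
        rw [← mul_assoc, hac, mul_assoc, ← hva.1, ← mul_assoc]
      rw [mul_add, mul_sub, mul_one, add_mul, l1, hab]
      abel
    have h10 : (star v * hu' + gu) * fu + (1 - fu) * (star v * hu' + gu) = star v * hu' + gu := by
      have l1 : (star v * hu') * fu = fu * (star v * hu') := by
        rw [mul_assoc, ← hac, ← mul_assoc, hva.2, mul_assoc]
      rw [add_mul, sub_mul, one_mul, mul_add, l1]
      rw [show gu * fu = fu * gu from hab.symm]
      abel
    have h11 : (star v * hu' + gu) * (gu + hu' * v) + (1 - fu) * (1 - fu) = 1 - fu := by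
      have l1 : (star v * hu') * gu = 0 := by
        rw [mul_assoc, hcb, mul_zero]
      have l2 : (star v * hu') * (hu' * v) = hu' * hu' := by
        rw [hvc.2, mul_assoc, ← mul_assoc (star v), hvc.2, mul_assoc, hv1, mul_one]
      have l3 : gu * (hu' * v) = 0 := by
        rw [← mul_assoc, hbc, zero_mul]
      have hAA : fu * fu = fu - (gu * gu + hu' * hu') :=
        eq_sub_of_add_eq (by rw [← add_assoc]; exact hsum2)
      rw [add_mul, mul_add, mul_add, l1, l2, l3, sub_mul, mul_sub, mul_sub, one_mul, mul_one,
        hAA]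
      simp only [one_mul, mul_one]
      abel
    rw [h00, h01, h10, h11]
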